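/- arXiv:2108.04429 — 4 statements merged into one kernel-verified Lean document; each statement's English description precedes it below -/
import Mathlib

section
/- Let a_1,…,a_n ∈ ℝ^m be the pairwise orthogonal rows of A = Σ V^t (Σ diagonal nonnegative, V column orthonormal), B = n^{-1} Σ_i a_i a_i^t, and let i_j be a random index uniformly distributed on {1,…,n}, and N_j = B - a_{i_j} a_{i_j}^t. Then for any diagonal matrix D ∈ ℝ^{m×m} and any fixed vector v ∈ ℝ^m (both independent of i_j): E[‖V D V^t N_j v‖²] = (n-1) ‖V D V^t B v‖². -/
open Matrix Finset

/-- Variance identity.  Let `a_1,…,a_n ∈ ℝ^m` be the pairwise orthogonal rows of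
`A = Σ Vᵗ` (`Σ` diagonal nonnegative, `V` orthogonal), `B = n⁻¹ Σ_i a_i a_iᵗ`,
and `N_j = B - a_{i_j} a_{i_j}ᵗ` with `i_j` uniform on `{1,…,n}`.  Then for any
diagonal `D` and fixed `v ∈ ℝ^m`:
`E[‖V D Vᵗ N_j v‖²] = (n-1) ‖V D Vᵗ B v‖²`,
the expectation being the uniform average over the index. -/
theorem variance_identity_N (n m : ℕ) (hn : 0 < n)
    (V : Matrix (Fin m) (Fin m) ℝ) (hV : Vᵀ * V = 1)
    (σ : Fin n → ℝ) (hσ : ∀ i, 0 ≤ σ i)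
    (D : Fin m → ℝ) (v : Fin m → ℝ)
    (A : Matrix (Fin n) (Fin m) ℝ)
    (hA : A = (Matrix.of (fun (i : Fin n) (j : Fin m) => if (i : ℕ) = (j : ℕ) then σ i else 0)) * Vᵀ)
    (a : Fin n → Fin m → ℝ) (ha : ∀ i k, a i k = A i k)
    (B : Matrix (Fin m) (Fin m) ℝ)
    (hB : B = ((n : ℝ)⁻¹) • ∑ i : Fin n, vecMulVec (a i) (a i))
    (S : Matrix (Fin m) (Fin m) ℝ) (hS : S = V * diagonal D * Vᵀ) :
    ((n : ℝ)⁻¹) * ∑ ℓ : Fin n,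
        (∑ k, (S.mulVec ((B - vecMulVec (a ℓ) (a ℓ)).mulVec v) k) ^ 2)
      = ((n : ℝ) - 1) * ∑ k, (S.mulVec (B.mulVec v) k) ^ 2 := by
  have hn0 : (n : ℝ) ≠ 0 := Nat.cast_ne_zero.mpr hn.ne'
  set P : Matrix (Fin n) (Fin m) ℝ :=
    Matrix.of (fun (i : Fin n) (j : Fin m) => if (i : ℕ) = (j : ℕ) then σ i else 0) with hP
  set u : Fin n → Fin m → ℝ := fun ℓ => S.mulVec (a ℓ) with hu
  set c : Fin n → ℝ := fun ℓ => ∑ q, a ℓ q * v q with hc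
  set w : Fin m → ℝ := S.mulVec (B.mulVec v) with hw
  set t : Fin n → ℝ := fun ℓ => ∑ k, u ℓ k * u ℓ k with ht
  -- S is symmetric
  have hSsym : ∀ p q, S p q = S q p := by
    intro p q
    have : Sᵀ = S := by
      rw [hS]
      simp [Matrix.transpose_mul, Matrix.mul_assoc]
    calc S p q = Sᵀ q p := rfl
      _ = S q p := by rw [this]
  -- a ℓ as row of A * S
  have hMAS : A * S = P * diagonal D * Vᵀ := by
    rw [hA, hS]
    simp only [Matrix.mul_assoc]
    rw [← Matrix.mul_assoc Vᵀ V, hV, Matrix.one_mul]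
  have huM : ∀ ℓ k, u ℓ k = (A * S) ℓ k := by
    intro ℓ k
    simp only [hu, mulVec, dotProduct, Matrix.mul_apply]
    apply Finset.sum_congr rfl
    intro p _
    rw [ha, hSsym]
    ring
  -- orthogonality
  have horth : ∀ ℓ j : Fin n, ℓ ≠ j → ∑ k, u ℓ k * u j k = 0 := by
    intro ℓ j hlj
    have hval : (ℓ : ℕ) ≠ (j : ℕ) := fun h => hlj (Fin.ext h)
    have key : ∑ k, u ℓ k * u j k = ((A * S) * (A * S)ᵀ) ℓ j := by
      rw [Matrix.mul_apply]
      exact Finset.sum_congr rfl fun k _ => by rw [huM, huM, transpose_apply]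
    rw [key, hMAS]
    have : (P * diagonal D * Vᵀ) * (P * diagonal D * Vᵀ)ᵀ
        = P * (diagonal D * diagonal D) * Pᵀ := by
      simp only [Matrix.transpose_mul, Matrix.transpose_transpose, diagonal_transpose]
      simp only [Matrix.mul_assoc]
      rw [← Matrix.mul_assoc Vᵀ V, hV, Matrix.one_mul]
    rw [this, diagonal_mul_diagonal]
    rw [Matrix.mul_apply]
    apply Finset.sum_eq_zero
    intro k _
    rw [Matrix.mul_diagonal, transpose_apply]
    simp only [hP, Matrix.of_apply]
    by_cases h1 : (ℓ : ℕ) = (k : ℕ)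
    · by_cases h2 : (j : ℕ) = (k : ℕ)
      · exact absurd (h1.trans h2.symm) hval
      · simp [h2]
    · simp [h1]
  -- B *ᵥ v pointwise
  have hBv : ∀ p, (B.mulVec v) p = (n : ℝ)⁻¹ * ∑ ℓ, a ℓ p * c ℓ := by
    intro p
    simp only [hB, mulVec, dotProduct, Matrix.smul_apply, Matrix.sum_apply,
      vecMulVec_apply, smul_eq_mul, Finset.sum_mul, Finset.mul_sum]
    rw [Finset.sum_comm]
    apply Finset.sum_congr rfl
    intro ℓ _
    simp only [hc, Finset.mul_sum]
    apply Finset.sum_congr rfl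
    intro q _
    ring
  -- w pointwise
  have hwk : ∀ k, w k = (n : ℝ)⁻¹ * ∑ ℓ, c ℓ * u ℓ k := by
    intro k
    show ∑ p, S k p * (B.mulVec v) p = _
    calc ∑ p, S k p * (B.mulVec v) p
        = ∑ p, ∑ ℓ, (n : ℝ)⁻¹ * (S k p * (a ℓ p * c ℓ)) := by
          apply Finset.sum_congr rfl
          intro p _
          rw [hBv p, Finset.mul_sum, Finset.mul_sum]
          exact Finset.sum_congr rfl fun ℓ _ => by ring
      _ = ∑ ℓ, (n : ℝ)⁻¹ * (c ℓ * ∑ p, S k p * a ℓ p) := by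
          rw [Finset.sum_comm]
          apply Finset.sum_congr rfl
          intro ℓ _
          rw [Finset.mul_sum, Finset.mul_sum]
          exact Finset.sum_congr rfl fun p _ => by ring
      _ = (n : ℝ)⁻¹ * ∑ ℓ, c ℓ * u ℓ k := by
          rw [Finset.mul_sum]
          rfl
  -- key term identity
  have hterm : ∀ (ℓ : Fin n) (k : Fin m),
      S.mulVec ((B - vecMulVec (a ℓ) (a ℓ)).mulVec v) k = w k - c ℓ * u ℓ k := by
    intro ℓ k
    have hsub : ∀ p, ((B - vecMulVec (a ℓ) (a ℓ)).mulVec v) p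
        = (B.mulVec v) p - a ℓ p * c ℓ := by
      intro p
      simp only [mulVec, dotProduct, Matrix.sub_apply, vecMulVec_apply, sub_mul,
        Finset.sum_sub_distrib]
      congr 1
      simp only [hc, Finset.mul_sum]
      apply Finset.sum_congr rfl
      intro q _
      ring
    simp only [mulVec, dotProduct] at hsub ⊢
    calc ∑ p, S k p * ((B - vecMulVec (a ℓ) (a ℓ)).mulVec v) p
        = ∑ p, (S k p * (B.mulVec v) p - c ℓ * (S k p * a ℓ p)) := by
          apply Finset.sum_congr rfl
          intro p _
          rw [show ((B - vecMulVec (a ℓ) (a ℓ)).mulVec v) p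
              = (B.mulVec v) p - a ℓ p * c ℓ from hsub p]
          ring
      _ = w k - c ℓ * u ℓ k := by
          rw [Finset.sum_sub_distrib, ← Finset.mul_sum]
          rfl
  -- dot of w with u j
  have hdotw : ∀ j, ∑ k, w k * u j k = (n : ℝ)⁻¹ * (c j * t j) := by
    intro j
    calc ∑ k, w k * u j k
        = ∑ k, ∑ ℓ, (n : ℝ)⁻¹ * (c ℓ * (u ℓ k * u j k)) := by
          apply Finset.sum_congr rfl
          intro k _
          rw [hwk k, Finset.mul_sum, Finset.sum_mul]
          apply Finset.sum_congr rfl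
          intro ℓ _
          ring
      _ = ∑ ℓ, (n : ℝ)⁻¹ * (c ℓ * ∑ k, u ℓ k * u j k) := by
          rw [Finset.sum_comm]
          exact Finset.sum_congr rfl fun ℓ _ => by rw [Finset.mul_sum, Finset.mul_sum]
      _ = (n : ℝ)⁻¹ * (c j * t j) := by
          rw [Finset.sum_eq_single j]
          · intro ℓ _ hlj
            rw [horth ℓ j hlj]
            ring
          · intro h
            exact absurd (Finset.mem_univ j) h
  -- norm of w
  have hQ : ∑ k, w k ^ 2 = (n : ℝ)⁻¹ * ((n : ℝ)⁻¹ * ∑ j, c j ^ 2 * t j) := by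
    calc ∑ k, w k ^ 2
        = ∑ k, ∑ ℓ, (n : ℝ)⁻¹ * (c ℓ * (w k * u ℓ k)) := by
          apply Finset.sum_congr rfl
          intro k _
          rw [sq, hwk k]
          rw [Finset.mul_sum, Finset.mul_sum]
          apply Finset.sum_congr rfl
          intro ℓ _
          ring
      _ = ∑ ℓ, (n : ℝ)⁻¹ * (c ℓ * ∑ k, w k * u ℓ k) := by
          rw [Finset.sum_comm]
          exact Finset.sum_congr rfl fun ℓ _ => by rw [Finset.mul_sum, Finset.mul_sum]
      _ = (n : ℝ)⁻¹ * ((n : ℝ)⁻¹ * ∑ j, c j ^ 2 * t j) := by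
          rw [Finset.mul_sum, Finset.mul_sum]
          apply Finset.sum_congr rfl
          intro j _
          rw [hdotw j]
          ring
  -- per-ℓ expansion
  have hexp : ∀ ℓ, (∑ k, (S.mulVec ((B - vecMulVec (a ℓ) (a ℓ)).mulVec v) k) ^ 2)
      = (∑ k, w k ^ 2) - 2 * c ℓ * ((n : ℝ)⁻¹ * (c ℓ * t ℓ)) + c ℓ ^ 2 * t ℓ := by
    intro ℓ
    rw [← hdotw ℓ]
    calc (∑ k, (S.mulVec ((B - vecMulVec (a ℓ) (a ℓ)).mulVec v) k) ^ 2)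
        = ∑ k, (w k ^ 2 - 2 * c ℓ * (w k * u ℓ k) + c ℓ ^ 2 * (u ℓ k * u ℓ k)) := by
          apply Finset.sum_congr rfl
          intro k _
          rw [hterm ℓ k]
          ring
      _ = (∑ k, w k ^ 2) - 2 * c ℓ * (∑ k, w k * u ℓ k) + c ℓ ^ 2 * t ℓ := by
          rw [Finset.sum_add_distrib, Finset.sum_sub_distrib, ← Finset.mul_sum,
            ← Finset.mul_sum]
  -- final algebra
  have hLHS : ∑ ℓ : Fin n,
      (∑ k, (S.mulVec ((B - vecMulVec (a ℓ) (a ℓ)).mulVec v) k) ^ 2)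
      = (n : ℝ) * (∑ k, w k ^ 2) - 2 * (n : ℝ)⁻¹ * (∑ ℓ, c ℓ ^ 2 * t ℓ)
        + ∑ ℓ, c ℓ ^ 2 * t ℓ := by
    rw [Finset.sum_congr rfl fun ℓ _ => hexp ℓ]
    rw [Finset.sum_add_distrib, Finset.sum_sub_distrib, Finset.sum_const,
      Finset.card_univ, Fintype.card_fin, nsmul_eq_mul]
    congr 1
    congr 1
    rw [Finset.mul_sum]
    apply Finset.sum_congr rfl
    intro ℓ _
    ring
  rw [hLHS]
  set T : ℝ := ∑ j, c j ^ 2 * t j with hT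
  rw [hQ]
  field_simp
  ring
end

section
/- For SVRG applied to a linear inverse problem, the epoch error satisfies the exact recursion e_{(K+1)M}^δ = (M_0^M − L_K B) e_{KM}^δ + (c_0 Σ_{i=0}^{M-1} M_0^i + L_K) ζ, where L_K = c_0 Σ_{i=1}^{M-1} H_{KM+i}(I − M_0^i) B^{-1}. -/
open Matrix Finset

/-- SVRG epoch recursion.  With `B = n⁻¹ AᵗA` invertible, `M₀ = I - c₀ B`,
`ζ = n⁻¹ Aᵗ ξ`, per-step operators `P k = I - c₀ a_{i_k} a_{i_k}ᵗ`,
`N k = B - a_{i_k} a_{i_k}ᵗ`, SVRG error recursion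
`e_{k+1} = P_k e_k - c₀ N_k e_{KM} + c₀ ζ` within epoch `K`, and
`G`, `H` the partial products `G (KM+M) = I`, `G k = G (k+1) P k`,
`H k = G (k+1) N k`, assuming the commuting property of `M₀, B, P_k, N_k`,
the epoch error satisfies
`e_{(K+1)M} = (M₀^M − L_K B) e_{KM} + (c₀ Σ_{i<M} M₀^i + L_K) ζ`
with `L_K = c₀ Σ_{i=1}^{M-1} H_{KM+i}(I − M₀^i) B⁻¹`. -/
theorem svrg_epoch_recursion (n m K M : ℕ) (hn : 0 < n) (hM : 0 < M)
    (a : Fin n → Fin m → ℝ) (c₀ : ℝ) (hc₀ : 0 < c₀)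
    (idx : ℕ → Fin n) (ζ : Fin m → ℝ)
    (B M₀ : Matrix (Fin m) (Fin m) ℝ) (P N G H : ℕ → Matrix (Fin m) (Fin m) ℝ)
    (hB : B = ((n : ℝ)⁻¹) • ∑ i : Fin n, vecMulVec (a i) (a i))
    (hBinv : IsUnit B.det)
    (hM₀ : M₀ = 1 - c₀ • B)
    (hP : ∀ k, P k = 1 - c₀ • vecMulVec (a (idx k)) (a (idx k)))
    (hN : ∀ k, N k = B - vecMulVec (a (idx k)) (a (idx k)))
    (hcomm : ∀ k k', Commute M₀ (P k) ∧ Commute M₀ (N k) ∧ Commute B (P k) ∧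
      Commute B (N k) ∧ Commute (P k) (P k') ∧ Commute (P k) (N k') ∧
      Commute (N k) (N k'))
    (hGtop : G (K * M + M) = 1)
    (hG : ∀ j, 1 ≤ j → j < M → G (K * M + j) = G (K * M + j + 1) * P (K * M + j))
    (hH : ∀ k, H k = G (k + 1) * N k)
    (e : ℕ → Fin m → ℝ)
    (hrec : ∀ k, K * M ≤ k → k < K * M + M →
      e (k + 1) = (P k).mulVec (e k) - c₀ • (N k).mulVec (e (K * M)) + c₀ • ζ) :
    e (K * M + M) =
      (M₀ ^ M - (c₀ • ∑ i ∈ Ico 1 M, H (K * M + i) * (1 - M₀ ^ i) * B⁻¹) * B).mulVec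
          (e (K * M))
        + ((c₀ • ∑ i ∈ range M, M₀ ^ i)
            + c₀ • ∑ i ∈ Ico 1 M, H (K * M + i) * (1 - M₀ ^ i) * B⁻¹).mulVec ζ := by
  have hBB : B⁻¹ * B = 1 := Matrix.nonsing_inv_mul B hBinv
  have hBBi : B * B⁻¹ = 1 := Matrix.mul_nonsing_inv B hBinv
  have hPN : ∀ k, P k = M₀ + c₀ • N k := by
    intro k; rw [hP, hN, hM₀]; module
  have h1M₀ : (1 : Matrix (Fin m) (Fin m) ℝ) - M₀ = c₀ • B := by
    rw [hM₀, sub_sub_cancel]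
  -- geometric identity
  have hgeom : ∀ i : ℕ, (1 - M₀ ^ i) * B⁻¹ = c₀ • ∑ l ∈ range i, M₀ ^ l := by
    intro i
    have h2 : (1 : Matrix (Fin m) (Fin m) ℝ) - M₀ ^ i
        = (∑ l ∈ range i, M₀ ^ l) * (c₀ • B) := by
      rw [← h1M₀, mul_sub, mul_one, ← neg_sub (M₀ ^ i) 1, ← geom_sum_mul M₀ i,
        mul_sub, mul_one, neg_sub]
    rw [h2, mul_smul_comm, smul_mul_assoc, mul_assoc, hBBi, mul_one]
  -- unrolling of the recursion within the epoch
  have key : ∀ d, d ≤ M - 1 →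
      e (K * M + M) = (G (K * M + (M - d))).mulVec (e (K * M + (M - d)))
        - c₀ • (∑ i ∈ Ico (M - d) M, H (K * M + i)).mulVec (e (K * M))
        + c₀ • (∑ i ∈ Ico (M - d) M, G (K * M + i + 1)).mulVec ζ := by
    intro d
    induction d with
    | zero =>
      intro _
      simp [hGtop, Matrix.one_mulVec, Matrix.zero_mulVec]
    | succ d ih =>
      intro hd
      obtain ⟨j, hj1, hjM, hjd⟩ : ∃ j, 1 ≤ j ∧ j < M ∧ M - (d + 1) = j :=
        ⟨M - (d + 1), by omega, by omega, rfl⟩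
      have ih' := ih (by omega)
      rw [show M - d = j + 1 from by omega] at ih'
      rw [show K * M + (j + 1) = K * M + j + 1 from rfl] at ih'
      rw [hjd]
      have hr := hrec (K * M + j) (Nat.le_add_right _ _) (by omega)
      have hGj := hG j hj1 hjM
      have hHj := (hH (K * M + j)).symm
      rw [hr] at ih'
      rw [Finset.sum_eq_sum_Ico_succ_bot hjM (fun i => H (K * M + i)),
          Finset.sum_eq_sum_Ico_succ_bot hjM (fun i => G (K * M + i + 1))]
      rw [ih']
      simp only [Matrix.mulVec_add, Matrix.mulVec_sub, Matrix.mulVec_smul,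
        Matrix.mulVec_mulVec, Matrix.add_mulVec]
      rw [← hGj, hHj]
      module
  -- closed formula for G within the epoch
  have hGform : ∀ d, d ≤ M - 1 →
      G (K * M + (M - d))
        = M₀ ^ d + c₀ • ∑ i ∈ Ico (M - d) M, H (K * M + i) * M₀ ^ (i - (M - d)) := by
    intro d
    induction d with
    | zero => intro _; simp [hGtop]
    | succ d ih =>
      intro hd
      obtain ⟨j, hj1, hjM, hjd⟩ : ∃ j, 1 ≤ j ∧ j < M ∧ M - (d + 1) = j :=
        ⟨M - (d + 1), by omega, by omega, rfl⟩
      have ih' := ih (by omega)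
      rw [show M - d = j + 1 from by omega] at ih'
      rw [show K * M + (j + 1) = K * M + j + 1 from rfl] at ih'
      rw [hjd]
      have hpow : ∀ i ∈ Ico (j + 1) M, H (K * M + i) * M₀ ^ (i - (j + 1)) * M₀
          = H (K * M + i) * M₀ ^ (i - j) := by
        intro i hi
        rw [mul_assoc, ← pow_succ, show i - (j + 1) + 1 = i - j from by
          have := (Finset.mem_Ico.mp hi).1; omega]
      have hsplit := Finset.sum_eq_sum_Ico_succ_bot hjM
        (fun i => H (K * M + i) * M₀ ^ (i - j))
      calc G (K * M + j) = G (K * M + j + 1) * P (K * M + j) := hG j hj1 hjM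
        _ = G (K * M + j + 1) * M₀ + c₀ • H (K * M + j) := by
            rw [hPN, mul_add, mul_smul_comm, hH (K * M + j)]
        _ = M₀ ^ (d + 1) + c₀ • (H (K * M + j) * M₀ ^ (j - j)
              + ∑ i ∈ Ico (j + 1) M, H (K * M + i) * M₀ ^ (i - j)) := by
            rw [ih', add_mul, smul_mul_assoc, Finset.sum_mul,
              Finset.sum_congr rfl hpow, ← pow_succ, Nat.sub_self, pow_zero, mul_one]
            module
        _ = M₀ ^ (d + 1) + c₀ • ∑ i ∈ Ico j M, H (K * M + i) * M₀ ^ (i - j) := by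
            rw [hsplit]
  -- closed formula for the accumulated sum of G's
  have hsum : ∀ d, d ≤ M - 1 →
      G (K * M + (M - d)) + ∑ i ∈ Ico (M - d) M, G (K * M + i + 1)
        = (∑ l ∈ range (d + 1), M₀ ^ l)
          + c₀ • ∑ i ∈ Ico (M - d) M,
              H (K * M + i) * ∑ l ∈ range (i - (M - d) + 1), M₀ ^ l := by
    intro d
    induction d with
    | zero => intro _; simp [hGtop]
    | succ d ih =>
      intro hd
      obtain ⟨j, hj1, hjM, hjd⟩ : ∃ j, 1 ≤ j ∧ j < M ∧ M - (d + 1) = j :=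
        ⟨M - (d + 1), by omega, by omega, rfl⟩
      have ih' := ih (by omega)
      rw [show M - d = j + 1 from by omega] at ih'
      rw [show K * M + (j + 1) = K * M + j + 1 from rfl] at ih'
      rw [hjd]
      have hGd1 := hGform (d + 1) hd
      rw [hjd] at hGd1
      rw [Finset.sum_eq_sum_Ico_succ_bot hjM (fun i => H (K * M + i) * M₀ ^ (i - j)),
        Nat.sub_self, pow_zero, mul_one] at hGd1
      have hmerge : ∀ i ∈ Ico (j + 1) M,
          H (K * M + i) * ∑ l ∈ range (i - j + 1), M₀ ^ l
            = H (K * M + i) * ∑ l ∈ range (i - (j + 1) + 1), M₀ ^ l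
              + H (K * M + i) * M₀ ^ (i - j) := by
        intro i hi
        rw [show i - (j + 1) + 1 = i - j from by
          have := (Finset.mem_Ico.mp hi).1; omega]
        rw [Finset.sum_range_succ, mul_add]
      have hsplitG := Finset.sum_eq_sum_Ico_succ_bot hjM (fun i => G (K * M + i + 1))
      have hsplitH := Finset.sum_eq_sum_Ico_succ_bot hjM
        (fun i => H (K * M + i) * ∑ l ∈ range (i - j + 1), M₀ ^ l)
      rw [Nat.sub_self, zero_add, Finset.sum_range_one, pow_zero, mul_one] at hsplitH
      rw [hsplitG, hsplitH, Finset.sum_congr rfl hmerge, Finset.sum_add_distrib,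
        Finset.sum_range_succ (fun l => M₀ ^ l) (d + 1)]
      linear_combination (norm := module) hGd1 + ih'
  -- specialize at the bottom of the epoch
  have hM1 : M - (M - 1) = 1 := by omega
  have hM2 : M - 1 + 1 = M := by omega
  have hfin := key (M - 1) le_rfl
  rw [hM1] at hfin
  have hG1 := hGform (M - 1) le_rfl
  rw [hM1] at hG1
  have hS1 := hsum (M - 1) le_rfl
  rw [hM1, hM2] at hS1
  have hstep0 := hrec (K * M) le_rfl (by omega)
  have hstep0' : e (K * M + 1) = M₀.mulVec (e (K * M)) + c₀ • ζ := by
    rw [hstep0, hPN, Matrix.add_mulVec, Matrix.smul_mulVec]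
    module
  -- the coefficient of e (K*M)
  have coeffE : G (K * M + 1) * M₀ - c₀ • ∑ i ∈ Ico 1 M, H (K * M + i)
      = M₀ ^ M - (c₀ • ∑ i ∈ Ico 1 M, H (K * M + i) * (1 - M₀ ^ i) * B⁻¹) * B := by
    have hL : ∀ i ∈ Ico 1 M, H (K * M + i) * (1 - M₀ ^ i) * B⁻¹ * B
        = H (K * M + i) - H (K * M + i) * M₀ ^ i := by
      intro i _
      rw [mul_assoc (H (K * M + i) * (1 - M₀ ^ i)) B⁻¹ B, hBB, mul_one, mul_sub, mul_one]
    have hpow : ∀ i ∈ Ico 1 M, H (K * M + i) * M₀ ^ (i - 1) * M₀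
        = H (K * M + i) * M₀ ^ i := by
      intro i hi
      rw [mul_assoc, ← pow_succ, show i - 1 + 1 = i from by
        have := (Finset.mem_Ico.mp hi).1; omega]
    have lhs_eq : G (K * M + 1) * M₀
        = M₀ ^ M + c₀ • ∑ i ∈ Ico 1 M, H (K * M + i) * M₀ ^ i := by
      rw [hG1, add_mul, smul_mul_assoc, Finset.sum_mul,
        Finset.sum_congr rfl hpow, ← pow_succ, hM2]
    have rhs_eq : (c₀ • ∑ i ∈ Ico 1 M, H (K * M + i) * (1 - M₀ ^ i) * B⁻¹) * B
        = c₀ • ∑ i ∈ Ico 1 M, H (K * M + i)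
          - c₀ • ∑ i ∈ Ico 1 M, H (K * M + i) * M₀ ^ i := by
      rw [smul_mul_assoc, Finset.sum_mul, Finset.sum_congr rfl hL,
        Finset.sum_sub_distrib, smul_sub]
    rw [lhs_eq, rhs_eq]
    module
  -- the coefficient of ζ
  have coeffZ : c₀ • G (K * M + 1) + c₀ • ∑ i ∈ Ico 1 M, G (K * M + i + 1)
      = (c₀ • ∑ i ∈ range M, M₀ ^ i)
        + c₀ • ∑ i ∈ Ico 1 M, H (K * M + i) * (1 - M₀ ^ i) * B⁻¹ := by
    have hterm2 : ∀ i ∈ Ico 1 M, H (K * M + i) * (1 - M₀ ^ i) * B⁻¹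
        = c₀ • (H (K * M + i) * ∑ l ∈ range i, M₀ ^ l) := by
      intro i _
      rw [mul_assoc, hgeom i, mul_smul_comm]
    have hterm3 : ∀ i ∈ Ico 1 M, H (K * M + i) * ∑ l ∈ range (i - 1 + 1), M₀ ^ l
        = H (K * M + i) * ∑ l ∈ range i, M₀ ^ l := by
      intro i hi
      rw [show i - 1 + 1 = i from by have := (Finset.mem_Ico.mp hi).1; omega]
    rw [Finset.sum_congr rfl hterm3] at hS1
    rw [Finset.sum_congr rfl hterm2, ← smul_add, hS1, smul_add, ← Finset.smul_sum]
  -- assemble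
  rw [← coeffE, ← coeffZ, hfin, hstep0']
  simp only [Matrix.mulVec_add, Matrix.mulVec_sub, Matrix.mulVec_smul,
    Matrix.mulVec_mulVec, Matrix.sub_mulVec, Matrix.add_mulVec, Matrix.smul_mulVec]
  module
end

section
/- For SVRG with constant step size c_0 applied to a linear inverse problem, the expected error at epoch K satisfies E[e_{KM}^δ] = M_0^{KM} e_0^δ + (I − M_0^{KM}) B^{-1} ζ, for every K ≥ 1. -/
open Matrix Finset

private lemma sum_mulVec' {ι : Type*} {m : ℕ} (s : Finset ι)
    (M : ι → Matrix (Fin m) (Fin m) ℝ) (v : Fin m → ℝ) :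
    (∑ i ∈ s, M i) *ᵥ v = ∑ i ∈ s, (M i) *ᵥ v := by
  ext j
  simp [Matrix.mulVec, dotProduct, Finset.sum_apply, Matrix.sum_apply, Finset.sum_mul]
  rw [Finset.sum_comm]

private lemma mulVec_sum' {ι : Type*} {m : ℕ} (s : Finset ι)
    (M : Matrix (Fin m) (Fin m) ℝ) (v : ι → Fin m → ℝ) :
    M *ᵥ (∑ i ∈ s, v i) = ∑ i ∈ s, M *ᵥ (v i) := by
  ext j
  simp [Matrix.mulVec, dotProduct, Finset.sum_apply, Finset.mul_sum]
  rw [Finset.sum_comm]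

/-- SVRG bias formula.  With `B = n⁻¹ Σ_i a_i a_iᵗ` invertible, `M₀ = I − c₀B`,
`ζ = n⁻¹ Aᵗξ`, i.i.d. uniform indices, and SVRG error recursion
`e_{k+1} = P_k e_k − c₀ N_k e_{k_M} + c₀ ζ` (anchor `k_M = ⌊k/M⌋M`), the
expected epoch error satisfies
`E[e_{KM}] = M₀^{KM} e_0 + (I − M₀^{KM}) B⁻¹ ζ` for every `K ≥ 1`;
the expectation is the uniform average over the `KM` indices used. -/
theorem svrg_expected_error (n m K M : ℕ) (hn : 0 < n) (hM : 0 < M) (hK : 1 ≤ K)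
    (a : Fin n → Fin m → ℝ) (c₀ : ℝ) (hc₀ : 0 < c₀)
    (ξ : Fin n → ℝ) (ζ e₀ : Fin m → ℝ)
    (B M₀ : Matrix (Fin m) (Fin m) ℝ)
    (hB : B = ((n : ℝ)⁻¹) • ∑ i : Fin n, vecMulVec (a i) (a i))
    (hBinv : IsUnit B.det)
    (hM₀ : M₀ = 1 - c₀ • B)
    (hζ : ζ = ((n : ℝ)⁻¹) • ∑ i : Fin n, ξ i • a i)
    (e : (ℕ → Fin n) → ℕ → (Fin m → ℝ))
    (h0 : ∀ idx, e idx 0 = e₀)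
    (hrec : ∀ idx k, e idx (k + 1) =
      (1 - c₀ • vecMulVec (a (idx k)) (a (idx k))).mulVec (e idx k)
        - c₀ • (B - vecMulVec (a (idx k)) (a (idx k))).mulVec (e idx (M * (k / M)))
        + c₀ • ζ) :
    (((n : ℝ) ^ (K * M))⁻¹) •
        ∑ f : Fin (K * M) → Fin n,
          e (fun k => if h : k < K * M then f ⟨k, h⟩ else ⟨0, hn⟩) (K * M)
      = (M₀ ^ (K * M)).mulVec e₀ + ((1 - M₀ ^ (K * M)) * B⁻¹).mulVec ζ := by
  have hnR : (n : ℝ) ≠ 0 := Nat.cast_ne_zero.mpr hn.ne'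
  -- dependence lemma: e idx k depends only on idx j for j < k
  have hdep : ∀ k (idx idx' : ℕ → Fin n),
      (∀ j, j < k → idx j = idx' j) → e idx k = e idx' k := by
    intro k
    induction k using Nat.strong_induction_on with
    | _ k ih =>
      match k with
      | 0 => intro idx idx' _; rw [h0, h0]
      | Nat.succ k =>
        intro idx idx' hag
        have h1 : e idx k = e idx' k :=
          ih k (Nat.lt_succ_self k) idx idx'
            (fun j hj => hag j (hj.trans (Nat.lt_succ_self k)))
        have hanch : M * (k / M) ≤ k := Nat.mul_div_le k M
        have h2 : e idx (M * (k / M)) = e idx' (M * (k / M)) :=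
          ih _ (Nat.lt_succ_of_le hanch) idx idx'
            (fun j hj => hag j (hj.trans_le (hanch.trans (Nat.le_succ k))))
        rw [hrec, hrec, hag k (Nat.lt_succ_self k), h1, h2]
  -- independence of the k-th index from the past
  have hindep : ∀ (p : Fin (K * M)) (Mat : Fin n → Matrix (Fin m) (Fin m) ℝ) (k : ℕ),
      k ≤ (p : ℕ) →
      ∑ f : Fin (K * M) → Fin n,
          (Mat (f p)) *ᵥ (e (fun j => if h : j < K * M then f ⟨j, h⟩ else ⟨0, hn⟩) k)
        = (n : ℝ)⁻¹ • ∑ f : Fin (K * M) → Fin n,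
          (∑ i, Mat i) *ᵥ (e (fun j => if h : j < K * M then f ⟨j, h⟩ else ⟨0, hn⟩) k) := by
    intro p Mat k hk
    have hconst : ∀ (x x' : Fin n) (g : {j : Fin (K * M) // j ≠ p} → Fin n),
        e (fun j => if h : j < K * M then
              (Equiv.funSplitAt p (Fin n)).symm (x, g) ⟨j, h⟩ else ⟨0, hn⟩) k
          = e (fun j => if h : j < K * M then
              (Equiv.funSplitAt p (Fin n)).symm (x', g) ⟨j, h⟩ else ⟨0, hn⟩) k := by
      intro x x' g
      apply hdep
      intro j hj
      have hjN : j < K * M := lt_of_lt_of_le (lt_of_lt_of_le hj hk) (le_of_lt p.isLt)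
      have hne : (⟨j, hjN⟩ : Fin (K * M)) ≠ p := by
        intro hcon
        have : j = (p : ℕ) := by simpa using congrArg Fin.val hcon
        omega
      simp [hjN, Equiv.funSplitAt_symm_apply, hne]
    rw [← Equiv.sum_comp (Equiv.funSplitAt p (Fin n)).symm
        (fun f => (Mat (f p)) *ᵥ (e (fun j => if h : j < K * M then f ⟨j, h⟩ else ⟨0, hn⟩) k)),
      ← Equiv.sum_comp (Equiv.funSplitAt p (Fin n)).symm
        (fun f => (∑ i, Mat i) *ᵥ (e (fun j => if h : j < K * M then f ⟨j, h⟩ else ⟨0, hn⟩) k)),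
      Fintype.sum_prod_type, Fintype.sum_prod_type]
    rw [Finset.sum_comm]
    conv_rhs => rw [Finset.sum_comm]
    rw [Finset.smul_sum]
    refine Finset.sum_congr rfl (fun g _ => ?_)
    have hp : ∀ x : Fin n, (Equiv.funSplitAt p (Fin n)).symm (x, g) p = x := by
      intro x; simp [Equiv.funSplitAt_symm_apply]
    calc ∑ x : Fin n,
          (Mat ((Equiv.funSplitAt p (Fin n)).symm (x, g) p)) *ᵥ
            (e (fun j => if h : j < K * M then
                (Equiv.funSplitAt p (Fin n)).symm (x, g) ⟨j, h⟩ else ⟨0, hn⟩) k)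
        = ∑ x : Fin n, (Mat x) *ᵥ
            (e (fun j => if h : j < K * M then
                (Equiv.funSplitAt p (Fin n)).symm (⟨0, hn⟩, g) ⟨j, h⟩ else ⟨0, hn⟩) k) := by
          refine Finset.sum_congr rfl (fun x _ => ?_)
          rw [hp x, hconst x ⟨0, hn⟩ g]
      _ = (∑ i, Mat i) *ᵥ
            (e (fun j => if h : j < K * M then
                (Equiv.funSplitAt p (Fin n)).symm (⟨0, hn⟩, g) ⟨j, h⟩ else ⟨0, hn⟩) k) := by
          rw [sum_mulVec']
      _ = (n : ℝ)⁻¹ • ∑ x : Fin n, (∑ i, Mat i) *ᵥ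
            (e (fun j => if h : j < K * M then
                (Equiv.funSplitAt p (Fin n)).symm (x, g) ⟨j, h⟩ else ⟨0, hn⟩) k) := by
          have : ∀ x : Fin n, (∑ i, Mat i) *ᵥ
              (e (fun j => if h : j < K * M then
                  (Equiv.funSplitAt p (Fin n)).symm (x, g) ⟨j, h⟩ else ⟨0, hn⟩) k)
              = (∑ i, Mat i) *ᵥ
              (e (fun j => if h : j < K * M then
                  (Equiv.funSplitAt p (Fin n)).symm (⟨0, hn⟩, g) ⟨j, h⟩ else ⟨0, hn⟩) k) := by
            intro x; rw [hconst x ⟨0, hn⟩ g]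
          rw [Finset.sum_congr rfl (fun x _ => this x), Finset.sum_const, Finset.card_univ,
            Fintype.card_fin, ← Nat.cast_smul_eq_nsmul ℝ, smul_smul, inv_mul_cancel₀ hnR,
            one_smul]
  -- one-step recursion for the summed error
  have hS : ∀ k, k < K * M →
      ∑ f : Fin (K * M) → Fin n,
          e (fun j => if h : j < K * M then f ⟨j, h⟩ else ⟨0, hn⟩) (k + 1)
        = M₀ *ᵥ (∑ f : Fin (K * M) → Fin n,
            e (fun j => if h : j < K * M then f ⟨j, h⟩ else ⟨0, hn⟩) k)
          + ((n : ℝ) ^ (K * M) * c₀) • ζ := by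
    intro k hk
    have hanch : M * (k / M) ≤ k := Nat.mul_div_le k M
    calc ∑ f : Fin (K * M) → Fin n,
            e (fun j => if h : j < K * M then f ⟨j, h⟩ else ⟨0, hn⟩) (k + 1)
        = ∑ f : Fin (K * M) → Fin n,
            ((e (fun j => if h : j < K * M then f ⟨j, h⟩ else ⟨0, hn⟩) k
              - c₀ • ((vecMulVec (a (f ⟨k, hk⟩)) (a (f ⟨k, hk⟩))) *ᵥ
                  (e (fun j => if h : j < K * M then f ⟨j, h⟩ else ⟨0, hn⟩) k)))
            - c₀ • ((B *ᵥ (e (fun j => if h : j < K * M then f ⟨j, h⟩ else ⟨0, hn⟩) (M * (k / M))))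
                - ((vecMulVec (a (f ⟨k, hk⟩)) (a (f ⟨k, hk⟩))) *ᵥ
                  (e (fun j => if h : j < K * M then f ⟨j, h⟩ else ⟨0, hn⟩) (M * (k / M)))))
            + c₀ • ζ) := by
          refine Finset.sum_congr rfl (fun f _ => ?_)
          rw [hrec]
          rw [dif_pos hk, Matrix.sub_mulVec, Matrix.one_mulVec, Matrix.smul_mulVec,
            Matrix.sub_mulVec, smul_sub]
      _ = (∑ f : Fin (K * M) → Fin n,
              e (fun j => if h : j < K * M then f ⟨j, h⟩ else ⟨0, hn⟩) k)
            - c₀ • (∑ f : Fin (K * M) → Fin n,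
              (vecMulVec (a (f ⟨k, hk⟩)) (a (f ⟨k, hk⟩))) *ᵥ
                (e (fun j => if h : j < K * M then f ⟨j, h⟩ else ⟨0, hn⟩) k))
            - c₀ • ((∑ f : Fin (K * M) → Fin n,
              B *ᵥ (e (fun j => if h : j < K * M then f ⟨j, h⟩ else ⟨0, hn⟩) (M * (k / M))))
              - (∑ f : Fin (K * M) → Fin n,
              (vecMulVec (a (f ⟨k, hk⟩)) (a (f ⟨k, hk⟩))) *ᵥ
                (e (fun j => if h : j < K * M then f ⟨j, h⟩ else ⟨0, hn⟩) (M * (k / M)))))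
            + ((n : ℝ) ^ (K * M) * c₀) • ζ := by
          rw [Finset.sum_add_distrib, Finset.sum_sub_distrib, Finset.sum_sub_distrib,
            ← Finset.smul_sum, ← Finset.smul_sum, Finset.sum_sub_distrib,
            Finset.sum_const, Finset.card_univ, Fintype.card_fun, Fintype.card_fin,
            Fintype.card_fin, ← Nat.cast_smul_eq_nsmul ℝ, smul_smul]
          push_cast
          ring_nf
      _ = M₀ *ᵥ (∑ f : Fin (K * M) → Fin n,
            e (fun j => if h : j < K * M then f ⟨j, h⟩ else ⟨0, hn⟩) k)
          + ((n : ℝ) ^ (K * M) * c₀) • ζ := by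
          have hA : ∀ j : ℕ, (n : ℝ)⁻¹ • ∑ f : Fin (K * M) → Fin n,
              (∑ i, vecMulVec (a i) (a i)) *ᵥ
                (e (fun j' => if h : j' < K * M then f ⟨j', h⟩ else ⟨0, hn⟩) j)
              = B *ᵥ (∑ f : Fin (K * M) → Fin n,
                  e (fun j' => if h : j' < K * M then f ⟨j', h⟩ else ⟨0, hn⟩) j) := by
            intro j
            rw [← mulVec_sum', ← Matrix.smul_mulVec, ← hB]
          have hBs : ∀ j : ℕ, (∑ f : Fin (K * M) → Fin n,
              B *ᵥ (e (fun j' => if h : j' < K * M then f ⟨j', h⟩ else ⟨0, hn⟩) j))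
              = B *ᵥ (∑ f : Fin (K * M) → Fin n,
                  e (fun j' => if h : j' < K * M then f ⟨j', h⟩ else ⟨0, hn⟩) j) :=
            fun j => (mulVec_sum' _ _ _).symm
          rw [hindep ⟨k, hk⟩ (fun i => vecMulVec (a i) (a i)) k (le_refl k),
            hindep ⟨k, hk⟩ (fun i => vecMulVec (a i) (a i)) (M * (k / M)) hanch,
            hA k, hA (M * (k / M)), hBs (M * (k / M)), sub_self,
            smul_zero, sub_zero, hM₀, Matrix.sub_mulVec, Matrix.one_mulVec,
            Matrix.smul_mulVec]
  -- closed form by induction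
  have hform : ∀ k, k ≤ K * M →
      ∑ f : Fin (K * M) → Fin n,
          e (fun j => if h : j < K * M then f ⟨j, h⟩ else ⟨0, hn⟩) k
        = ((n : ℝ) ^ (K * M)) •
            ((M₀ ^ k) *ᵥ e₀ + (c₀ • ∑ i ∈ range k, M₀ ^ i) *ᵥ ζ) := by
    intro k
    induction k with
    | zero =>
      intro _
      simp only [h0, pow_zero, Matrix.one_mulVec, range_zero, Finset.sum_empty, smul_zero,
        Matrix.zero_mulVec, add_zero, Finset.sum_const, Finset.card_univ, Fintype.card_fun,
        Fintype.card_fin]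
      rw [← Nat.cast_smul_eq_nsmul ℝ]
      push_cast
      ring_nf
    | succ k ih =>
      intro hk1
      have hk : k < K * M := hk1
      rw [hS k hk, ih (le_of_lt hk), Matrix.mulVec_smul, Matrix.mulVec_add,
        Matrix.mulVec_mulVec, Matrix.mulVec_mulVec, ← pow_succ', mul_smul,
        ← smul_add]
      congr 1
      rw [add_assoc]
      congr 1
      rw [geom_sum_succ, smul_add, Matrix.add_mulVec, ← Matrix.mul_smul,
        Matrix.smul_mulVec, Matrix.one_mulVec]
  -- geometric identity
  have h1M : (1 : Matrix (Fin m) (Fin m) ℝ) - M₀ = c₀ • B := by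
    rw [hM₀]; abel
  have hgeom : c₀ • ∑ i ∈ range (K * M), M₀ ^ i = (1 - M₀ ^ (K * M)) * B⁻¹ := by
    have hg : (∑ i ∈ range (K * M), M₀ ^ i) * (c₀ • B) = 1 - M₀ ^ (K * M) := by
      rw [← h1M]
      have := geom_sum_mul M₀ (K * M)
      calc (∑ i ∈ range (K * M), M₀ ^ i) * (1 - M₀)
          = -((∑ i ∈ range (K * M), M₀ ^ i) * (M₀ - 1)) := by
            rw [mul_sub, mul_sub, mul_one]; abel
        _ = 1 - M₀ ^ (K * M) := by rw [this, neg_sub]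
    rw [← hg, mul_smul_comm, Matrix.smul_mul, mul_assoc, Matrix.mul_nonsing_inv B hBinv,
      mul_one]
  rw [hform (K * M) (le_refl _), smul_smul, inv_mul_cancel₀ (pow_ne_zero _ hnR), one_smul,
    hgeom]
end

section
/- Let B be symmetric positive definite with c_0‖B‖ ≤ 1 and M_0 = I − c_0B. Then Σ_{j=0}^{K} ‖M_0^{(K−j)M/2} B‖² ≤ (4 + 2(Mc_0‖B‖)²) c_0^{-2} M^{-2}, for every integer K ≥ 0 and positive integer M. -/
open Matrix Finset
open scoped Matrix.Norms.L2Operator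

section
open scoped ComplexOrder
noncomputable def Matrix.PosSemidef.sqrt {n 𝕜 : Type*} [Fintype n] [RCLike 𝕜] [DecidableEq n]
    {A : Matrix n n 𝕜} (hA : A.PosSemidef) : Matrix n n 𝕜 :=
  (hA.1.eigenvectorUnitary : Matrix n n 𝕜) * diagonal ((↑) ∘ Real.sqrt ∘ hA.1.eigenvalues) *
    (star hA.1.eigenvectorUnitary : Matrix n n 𝕜)
end
private lemma shpb_eq_sqrt {m : ℕ} {A S : Matrix (Fin m) (Fin m) ℝ} (hA : A.PosSemidef)
    (hS : S.PosSemidef) (h : S ^ 2 = A) : S = hA.sqrt := by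
  have h1 : hA.sqrt = cfc Real.sqrt A := by
    rw [Matrix.IsHermitian.cfc_eq hA.1, Matrix.IsHermitian.cfc, Unitary.conjStarAlgAut_apply]; rfl
  have hSa : IsSelfAdjoint S := hS.1
  rw [h1, ← h, ← cfc_comp_pow Real.sqrt 2 S]
  conv_lhs => rw [← cfc_id' ℝ S hSa]
  refine cfc_congr fun x hx => ?_
  rw [Matrix.IsHermitian.spectrum_real_eq_range_eigenvalues hS.1] at hx
  obtain ⟨i, rfl⟩ := hx
  exact (Real.sqrt_sq (hS.eigenvalues_nonneg i)).symm

private lemma shpb_binom_aux (q : ℕ) (t : ℝ) (ht : 0 ≤ t) :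
    1 + q * t + q * (q - 1) / 2 * t ^ 2 ≤ (1 + t) ^ q := by
  induction q with
  | zero => norm_num
  | succ n ih =>
    have h1 : (0:ℝ) ≤ 1 + t := by linarith
    have h2 := mul_le_mul_of_nonneg_right ih h1
    have hn : (0:ℝ) ≤ n := Nat.cast_nonneg n
    have hc : (0:ℝ) ≤ (n:ℝ) * ((n:ℝ) - 1) := by
      rcases Nat.eq_zero_or_pos n with h | h
      · simp [h]
      · have : (1:ℝ) ≤ n := by exact_mod_cast h
        nlinarith
    push_cast [pow_succ] at h2 ⊢
    nlinarith [mul_nonneg hc (mul_nonneg (mul_nonneg ht ht) ht)]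

private lemma shpb_scalar_bound (q : ℕ) (hq : 2 ≤ q) (t : ℝ) (ht0 : 0 ≤ t) (ht1 : t ≤ 1) :
    (1 - t) ^ q * t ^ 2 ≤ 4 / (q : ℝ) ^ 2 := by
  have hQ : (2:ℝ) ≤ q := by exact_mod_cast hq
  have h1t : (0:ℝ) ≤ 1 - t := by linarith
  have hpow : (0:ℝ) ≤ (1-t)^q := pow_nonneg h1t q
  have hb := shpb_binom_aux q t ht0
  have hmul : (1-t)^q * (1+t)^q ≤ 1 := by
    rw [← mul_pow]
    calc ((1-t)*(1+t))^q ≤ 1^q := pow_le_pow_left₀ (by nlinarith) (by nlinarith) q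
    _ = 1 := one_pow q
  have key : (1-t)^q * ((q:ℝ)*((q:ℝ)-1)/2 * t^2) ≤ 1 := by
    refine le_trans (mul_le_mul_of_nonneg_left ?_ hpow) hmul
    nlinarith [mul_nonneg (by linarith : (0:ℝ) ≤ (q:ℝ)) ht0]
  rw [le_div_iff₀ (by positivity)]
  nlinarith [mul_nonneg (mul_nonneg hpow (sq_nonneg t))
    (mul_nonneg (by linarith : (0:ℝ) ≤ (q:ℝ)) (by linarith : (0:ℝ) ≤ (q:ℝ) - 2)), key]

private lemma shpb_sum_indicator_le (n : ℕ) (b : ℝ) (hb : 0 ≤ b) :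
    ∑ k ∈ range (n+1), (if k ≤ 1 then b else 0) ≤ 2 * b := by
  calc ∑ k ∈ range (n+1), (if k ≤ 1 then b else 0)
      = ∑ _k ∈ (range (n+1)).filter (fun k => k ≤ 1), b := (Finset.sum_filter _ _).symm
    _ ≤ ∑ _k ∈ range 2, b := Finset.sum_le_sum_of_subset_of_nonneg (fun k hk => by
        simp only [mem_filter, mem_range] at hk ⊢; omega) (fun _ _ _ => hb)
    _ = 2 * b := by simp [two_mul]

private lemma shpb_sum_aux (n : ℕ) :
    ∑ k ∈ range (n+1), (if k ≤ 1 then (0:ℝ) else ((k:ℝ)^2)⁻¹)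
    ≤ 1 - (if n ≤ 1 then 1 else ((n:ℝ))⁻¹) := by
  induction n with
  | zero => simp
  | succ n ih =>
    rw [sum_range_succ]
    rcases Nat.lt_or_ge n 1 with h | h
    · interval_cases n
      norm_num
    · rcases Nat.lt_or_ge n 2 with h3 | h3
      · have hn1 : n = 1 := by omega
        subst hn1
        norm_num at ih ⊢
        linarith
      · have h2 : ¬ (n+1 ≤ 1) := by omega
        rw [if_neg (by omega : ¬ (n+1 ≤ 1)), if_neg h2, if_neg (by omega : ¬ n ≤ 1)] at *
        have hn : (2:ℝ) ≤ n := by exact_mod_cast h3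
        have hkey : ((((n:ℕ)+1:ℕ):ℝ)^2)⁻¹ ≤ (n:ℝ)⁻¹ - (((n:ℕ)+1:ℕ):ℝ)⁻¹ := by
          push_cast
          have hpos : (0:ℝ) < n := by linarith
          have hpos1 : (0:ℝ) < (n:ℝ)+1 := by linarith
          rw [show (n:ℝ)⁻¹ - ((n:ℝ)+1)⁻¹ = ((n:ℝ)*((n:ℝ)+1))⁻¹ by field_simp; ring]
          apply inv_anti₀ (by positivity)
          nlinarith
        push_cast at *
        linarith

private lemma shpb_diag_norm_le {m : ℕ} (v : Fin m → ℝ) (c : ℝ) (hc : 0 ≤ c)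
    (hv : ∀ i, |v i| ≤ c) : ‖diagonal v‖ ≤ c := by
  rw [Matrix.l2_opNorm_def]
  refine ContinuousLinearMap.opNorm_le_bound _ hc fun x => ?_
  have hx : ∀ i, ((Matrix.toEuclideanLin.trans LinearMap.toContinuousLinearMap) (diagonal v) x) i
      = v i * x i := by
    intro i
    simp [Matrix.toEuclideanLin_apply, Matrix.mulVec_diagonal]
  rw [EuclideanSpace.norm_eq]
  simp only [hx, Real.norm_eq_abs, sq_abs]
  have h2 : ∑ i, (v i * x i)^2 ≤ ∑ i, c^2 * (x i)^2 := by
    refine Finset.sum_le_sum fun i _ => ?_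
    rw [mul_pow]
    exact mul_le_mul_of_nonneg_right (by nlinarith [hv i, sq_abs (v i), abs_nonneg (v i)])
      (sq_nonneg _)
  calc Real.sqrt (∑ i, (v i * x i)^2) ≤ Real.sqrt (∑ i, c^2 * (x i)^2) := Real.sqrt_le_sqrt h2
  _ = c * ‖x‖ := by
      rw [← Finset.mul_sum, Real.sqrt_mul (sq_nonneg c), Real.sqrt_sq hc, EuclideanSpace.norm_eq]
      simp [Real.norm_eq_abs, sq_abs]

/-- Let `B` be symmetric positive definite with `c₀‖B‖ ≤ 1` and `M₀ = I − c₀B`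
(which is then positive semidefinite).  Then for every `K ≥ 0` and positive
integer `M`,
`Σ_{j=0}^{K} ‖M₀^{(K−j)M/2} B‖² ≤ (4 + 2(Mc₀‖B‖)²) c₀⁻² M⁻²`,
where `M₀^{q/2}` is the positive semidefinite square root of `M₀^q` and `‖·‖`
the spectral norm. -/
theorem sum_half_power_bound (m K M : ℕ) (hM : 0 < M)
    (B : Matrix (Fin m) (Fin m) ℝ) (hB : B.PosDef)
    (c₀ : ℝ) (hc₀ : 0 < c₀) (hnorm : c₀ * ‖B‖ ≤ 1)
    (hM₀ : (1 - c₀ • B).PosSemidef) :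
    ∑ j ∈ range (K + 1), ‖(hM₀.pow ((K - j) * M)).sqrt * B‖ ^ 2
      ≤ (4 + 2 * ((M : ℝ) * c₀ * ‖B‖) ^ 2) * (c₀ ^ 2)⁻¹ * (((M : ℝ)) ^ 2)⁻¹ := by
  classical
  rcases Nat.eq_zero_or_pos m with hm | hm
  · subst hm
    have hz : ∀ X : Matrix (Fin 0) (Fin 0) ℝ, X = 0 := fun X => by
      ext i
      exact i.elim0
    have hzz : ∀ j ∈ range (K+1), ‖(hM₀.pow ((K - j) * M)).sqrt * B‖ ^ 2 = 0 := by
      intro j _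
      rw [hz ((hM₀.pow ((K - j) * M)).sqrt * B)]
      simp
    rw [Finset.sum_congr rfl hzz, Finset.sum_const, smul_zero]
    positivity
  have hBH : B.IsHermitian := hB.1
  set U : Matrix.unitaryGroup (Fin m) ℝ := hBH.eigenvectorUnitary with hU
  set V : Matrix (Fin m) (Fin m) ℝ := (U : Matrix (Fin m) (Fin m) ℝ) with hV
  set d : Fin m → ℝ := hBH.eigenvalues with hd
  have hspec : B = V * diagonal d * star V := by
    simpa using hBH.spectral_theorem
  have hUstar : star V * V = 1 := Unitary.coe_star_mul_self U
  have hUU : V * star V = 1 := Unitary.coe_mul_star_self U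
  have conj_mul : ∀ v w : Fin m → ℝ,
      (V * diagonal v * star V) * (V * diagonal w * star V)
      = V * diagonal (fun i => v i * w i) * star V := by
    intro v w
    calc (V * diagonal v * star V) * (V * diagonal w * star V)
        = V * (diagonal v * (star V * V) * diagonal w) * star V := by noncomm_ring
      _ = V * diagonal (fun i => v i * w i) * star V := by
          rw [hUstar, mul_one, diagonal_mul_diagonal]
  have hM₀spec : (1 : Matrix (Fin m) (Fin m) ℝ) - c₀ • B
      = V * diagonal (fun i => 1 - c₀ * d i) * star V := by
    have hdd : diagonal (fun i => 1 - c₀ * d i)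
        = (1 : Matrix (Fin m) (Fin m) ℝ) - c₀ • diagonal d := by
      rw [← diagonal_one, ← diagonal_smul, ← diagonal_sub]
      rfl
    rw [hdd, mul_sub, sub_mul, mul_one, hUU, mul_smul_comm, smul_mul_assoc, ← hspec]
  have ht : ∀ i, 0 ≤ 1 - c₀ * d i := by
    have h := hM₀.conjTranspose_mul_mul_same V
    rw [hM₀spec] at h
    have he : Vᴴ * (V * diagonal (fun i => 1 - c₀ * d i) * star V) * V
        = diagonal (fun i => 1 - c₀ * d i) := by
      rw [← Matrix.star_eq_conjTranspose]
      calc star V * (V * diagonal (fun i => 1 - c₀ * d i) * star V) * V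
          = (star V * V) * diagonal (fun i => 1 - c₀ * d i) * (star V * V) := by noncomm_ring
        _ = _ := by rw [hUstar, one_mul, mul_one]
    rw [he] at h
    exact posSemidef_diagonal_iff.mp h
  have hd0 : ∀ i, 0 ≤ d i := fun i => hB.posSemidef.eigenvalues_nonneg i
  have hpow : ∀ q : ℕ, (1 - c₀ • B) ^ q
      = V * diagonal (fun i => (1 - c₀ * d i) ^ q) * star V := by
    intro q
    induction q with
    | zero => simp only [pow_zero, diagonal_one, mul_one, hUU]
    | succ k ih =>
      rw [pow_succ, ih, hM₀spec, conj_mul]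
      have he2 : (fun i => (1 - c₀ * d i) ^ k * (1 - c₀ * d i))
          = (fun i => (1 - c₀ * d i) ^ (k+1)) := funext fun i => (pow_succ _ k).symm
      rw [he2]
  have hsqrt : ∀ q : ℕ, (hM₀.pow q).sqrt
      = V * diagonal (fun i => Real.sqrt ((1 - c₀ * d i) ^ q)) * star V := by
    intro q
    have hS : (V * diagonal (fun i => Real.sqrt ((1 - c₀ * d i) ^ q)) * star V).PosSemidef := by
      rw [Matrix.star_eq_conjTranspose]
      exact (posSemidef_diagonal_iff.mpr fun i => Real.sqrt_nonneg _).mul_mul_conjTranspose_same V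
    have hsq : (V * diagonal (fun i => Real.sqrt ((1 - c₀ * d i) ^ q)) * star V) ^ 2
        = (1 - c₀ • B) ^ q := by
      rw [pow_two, conj_mul, hpow q]
      have he2 : (fun i => Real.sqrt ((1 - c₀ * d i) ^ q) * Real.sqrt ((1 - c₀ * d i) ^ q))
          = (fun i => (1 - c₀ * d i) ^ q) :=
        funext fun i => Real.mul_self_sqrt (pow_nonneg (ht i) q)
      rw [he2]
    exact (shpb_eq_sqrt (hM₀.pow q) hS hsq).symm
  have hterm : ∀ q : ℕ, (hM₀.pow q).sqrt * B
      = V * diagonal (fun i => Real.sqrt ((1 - c₀ * d i) ^ q) * d i) * star V := by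
    intro q
    rw [hsqrt q, hspec, conj_mul]
  have hnormconj : ∀ v : Fin m → ℝ, ‖V * diagonal v * star V‖ = ‖diagonal v‖ := by
    intro v
    calc ‖V * diagonal v * star V‖ = ‖V * (diagonal v * star V)‖ := by rw [mul_assoc]
      _ = ‖diagonal v * star V‖ := CStarRing.norm_coe_unitary_mul U _
      _ = ‖diagonal v‖ := by
          rw [show star V
            = ((star U : Matrix.unitaryGroup (Fin m) ℝ) : Matrix (Fin m) (Fin m) ℝ) from rfl]
          exact CStarRing.norm_mul_coe_unitary _ _
  -- bound 1 : every term is at most ‖B‖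
  have hbound1 : ∀ q : ℕ, ‖(hM₀.pow q).sqrt * B‖ ≤ ‖B‖ := by
    intro q
    have hs1 : ‖(hM₀.pow q).sqrt‖ ≤ 1 := by
      rw [hsqrt q, hnormconj]
      refine shpb_diag_norm_le _ 1 zero_le_one fun i => ?_
      rw [abs_of_nonneg (Real.sqrt_nonneg _)]
      refine Real.sqrt_le_one.mpr (pow_le_one₀ (ht i) ?_)
      have := mul_nonneg hc₀.le (hd0 i)
      linarith
    calc ‖(hM₀.pow q).sqrt * B‖ ≤ ‖(hM₀.pow q).sqrt‖ * ‖B‖ := Matrix.l2_opNorm_mul _ _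
    _ ≤ 1 * ‖B‖ := mul_le_mul_of_nonneg_right hs1 (norm_nonneg _)
    _ = ‖B‖ := one_mul _
  -- bound 2 : for q ≥ 2, the term is at most 2 / (q c₀)
  have hbound2 : ∀ q : ℕ, 2 ≤ q → ‖(hM₀.pow q).sqrt * B‖ ≤ 2 / ((q:ℝ) * c₀) := by
    intro q hq
    have hq0 : (0:ℝ) < q := by
      have : (2:ℝ) ≤ q := by exact_mod_cast hq
      linarith
    rw [hterm q, hnormconj]
    refine shpb_diag_norm_le _ _ (by positivity) fun i => ?_
    have hti := ht i
    have hdi := hd0 i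
    have h0 : 0 ≤ c₀ * d i := mul_nonneg hc₀.le hdi
    have habs : |Real.sqrt ((1 - c₀ * d i) ^ q) * d i|
        = Real.sqrt ((1 - c₀ * d i) ^ q * (d i) ^ 2) := by
      rw [abs_of_nonneg (mul_nonneg (Real.sqrt_nonneg _) hdi),
        Real.sqrt_mul (pow_nonneg hti q), Real.sqrt_sq hdi]
    rw [habs]
    have hsc := shpb_scalar_bound q hq (c₀ * d i) h0 (by linarith)
    have hineq : (1 - c₀ * d i) ^ q * (d i) ^ 2 ≤ (2 / ((q:ℝ) * c₀)) ^ 2 := by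
      have h2 : (1 - c₀ * d i) ^ q * (d i) ^ 2
          = ((1 - c₀ * d i) ^ q * (c₀ * d i) ^ 2) / c₀ ^ 2 := by
        field_simp
      have h3 : (2 / ((q:ℝ) * c₀)) ^ 2 = (4 / (q:ℝ) ^ 2) / c₀ ^ 2 := by
        field_simp
        ring
      rw [h2, h3]
      gcongr
    calc Real.sqrt ((1 - c₀ * d i) ^ q * (d i) ^ 2)
        ≤ Real.sqrt ((2 / ((q:ℝ) * c₀)) ^ 2) := Real.sqrt_le_sqrt hineq
      _ = 2 / ((q:ℝ) * c₀) := Real.sqrt_sq (by positivity)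
  -- per-term bound with the summable majorant
  set C : ℝ := 4 * (c₀ ^ 2)⁻¹ * ((M:ℝ) ^ 2)⁻¹ with hC
  have hC0 : 0 ≤ C := by positivity
  have hstep : ∀ j ∈ range (K+1), ‖(hM₀.pow ((K - j) * M)).sqrt * B‖ ^ 2
      ≤ (if K - j ≤ 1 then ‖B‖^2 else 0)
        + C * (if K - j ≤ 1 then 0 else (((K-j : ℕ):ℝ)^2)⁻¹) := by
    intro j _
    by_cases hk : K - j ≤ 1
    · rw [if_pos hk, if_pos hk, mul_zero, add_zero]
      exact pow_le_pow_left₀ (norm_nonneg _) (hbound1 _) 2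
    · rw [if_neg hk, if_neg hk, zero_add]
      push_neg at hk
      set k := K - j with hkdef
      have hk2 : 2 ≤ k := hk
      have hq2 : 2 ≤ k * M := le_trans hk2 (Nat.le_mul_of_pos_right k hM)
      have hb2 := hbound2 (k * M) hq2
      have hb3 := pow_le_pow_left₀ (norm_nonneg _) hb2 2
      refine hb3.trans (le_of_eq ?_)
      have hkR : (0:ℝ) < (k:ℝ) := by
        have : (2:ℝ) ≤ (k:ℝ) := by exact_mod_cast hk2
        linarith
      have hMR : (0:ℝ) < (M:ℝ) := by exact_mod_cast hM
      rw [hC]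
      push_cast
      field_simp
      ring
  refine (Finset.sum_le_sum hstep).trans ?_
  have hrefl := Finset.sum_range_reflect
    (fun k => (if k ≤ 1 then ‖B‖^2 else 0) + C * (if k ≤ 1 then 0 else (((k : ℕ):ℝ)^2)⁻¹)) (K+1)
  simp only [Nat.add_sub_cancel] at hrefl
  rw [hrefl]
  rw [Finset.sum_add_distrib, ← Finset.mul_sum]
  have h1 := shpb_sum_indicator_le K (‖B‖^2) (by positivity)
  have h2 : C * (∑ k ∈ range (K+1), (if k ≤ 1 then (0:ℝ) else ((k:ℝ)^2)⁻¹)) ≤ C * 1 := by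
    refine mul_le_mul_of_nonneg_left ((shpb_sum_aux K).trans ?_) hC0
    by_cases hK : K ≤ 1
    · rw [if_pos hK]; linarith
    · rw [if_neg hK]
      have : (0:ℝ) ≤ ((K:ℝ))⁻¹ := by positivity
      linarith
  have hgoal : 2 * ‖B‖^2 + C * 1
      = (4 + 2 * ((M : ℝ) * c₀ * ‖B‖) ^ 2) * (c₀ ^ 2)⁻¹ * (((M : ℝ)) ^ 2)⁻¹ := by
    have hMR : ((M:ℝ)) ≠ 0 := by positivity
    have hcR : c₀ ≠ 0 := ne_of_gt hc₀
    rw [hC]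
    field_simp
    ring
  linarith
end
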